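/- arXiv:2506.21870 — 2 statements merged into one kernel-verified Lean document; each statement's English description precedes it below -/
import Mathlib

section
/- Let (A,[·,·],·,𝔅) be a finite-dimensional quadratic Poisson algebra, I_𝔅: A* → A the linear isomorphism induced by 𝔅, and r ∈ A⊗A. Set P := r₊ ∘ I_𝔅⁻¹ and I_r := r₊ − r₋. Then r is a solution of the Poisson Yang–Baxter equation in (A,[·,·],·) if and only if for all a,b ∈ A: [P(a),P(b)] = P([P(a),b] + [a,P(b)] − [a,(I_r ∘ I_𝔅⁻¹)(b)]) and P(a)·P(b) = P(P(a)·b + a·P(b) − a·(I_r ∘ I_𝔅⁻¹)(b)). -/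
open TensorProduct

section Preamble

variable {k A : Type*} [Field k] [AddCommGroup A] [Module k A]

/-- The Poisson algebra axioms for a pair of bilinear operations `br` (the Lie bracket)
and `mul` (the commutative associative product), including the Leibniz compatibility. -/
structure IsPoisson {k A : Type*} [Field k] [AddCommGroup A] [Module k A]
    (br mul : A →ₗ[k] A →ₗ[k] A) : Prop where
  antisymm : ∀ a b, br a b = - br b a
  jacobi : ∀ a b c, br a (br b c) = br (br a b) c + br b (br a c)
  comm : ∀ a b, mul a b = mul b a
  assoc : ∀ a b c, mul (mul a b) c = mul a (mul b c)
  leibniz : ∀ a b c, br a (mul b c) = mul (br a b) c + mul b (br a c)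

/-- `r ↦ r₊`, where `⟨r₊(x*), y*⟩ = ⟨r, x* ⊗ y*⟩`. -/
noncomputable def rPlus : (A ⊗[k] A) →ₗ[k] Module.Dual k A →ₗ[k] A :=
  TensorProduct.lift <| LinearMap.mk₂ k
    (fun a b => (Module.Dual.eval k A a).smulRight b)
    (fun a a' b => by ext f; simp [add_smul])
    (fun c a b => by ext f; simp [smul_smul])
    (fun a b b' => by ext f; simp)
    (fun c a b => by ext f; simp [smul_smul, mul_comm])

/-- The flip `τ : A ⊗ A → A ⊗ A`. -/
noncomputable def tauT : (A ⊗[k] A) →ₗ[k] A ⊗[k] A := (TensorProduct.comm k A A).toLinearMap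

/-- `r ↦ r₋`, where `⟨r₊(x*), y*⟩ = ⟨r, x* ⊗ y*⟩ = −⟨x*, r₋(y*)⟩`. -/
noncomputable def rMinus : (A ⊗[k] A) →ₗ[k] Module.Dual k A →ₗ[k] A :=
  - (rPlus ∘ₗ tauT)

@[simp] lemma rPlus_tmul (a b : A) (f : Module.Dual k A) :
    rPlus (a ⊗ₜ[k] b) f = f a • b := rfl

@[simp] lemma dualMap_add_apply (f g : A →ₗ[k] A) (y : Module.Dual k A) :
    (f + g).dualMap y = f.dualMap y + g.dualMap y := by ext a; simp

@[simp] lemma dualMap_smul_apply (c : k) (f : A →ₗ[k] A) (y : Module.Dual k A) :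
    (c • f).dualMap y = c • f.dualMap y := by ext a; simp

@[simp] lemma dualMap_neg_apply (f : A →ₗ[k] A) (y : Module.Dual k A) :
    (-f).dualMap y = - f.dualMap y := by ext a; simp

noncomputable def T1213 (m : A →ₗ[k] A →ₗ[k] A) :
    (A ⊗[k] A) ⊗[k] (A ⊗[k] A) →ₗ[k] A ⊗[k] (A ⊗[k] A) :=
  (TensorProduct.map (TensorProduct.lift m) LinearMap.id) ∘ₗ
    (TensorProduct.tensorTensorTensorComm k A A A A).toLinearMap

noncomputable def T1323 (m : A →ₗ[k] A →ₗ[k] A) :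
    (A ⊗[k] A) ⊗[k] (A ⊗[k] A) →ₗ[k] A ⊗[k] (A ⊗[k] A) :=
  (TensorProduct.assoc k A A A).toLinearMap ∘ₗ
    (TensorProduct.map LinearMap.id (TensorProduct.lift m)) ∘ₗ
    (TensorProduct.tensorTensorTensorComm k A A A A).toLinearMap

noncomputable def T2312 (m : A →ₗ[k] A →ₗ[k] A) :
    (A ⊗[k] A) ⊗[k] (A ⊗[k] A) →ₗ[k] A ⊗[k] (A ⊗[k] A) :=
  (TensorProduct.leftComm k A A A).toLinearMap ∘ₗ
    (TensorProduct.map (TensorProduct.lift m ∘ₗ (TensorProduct.comm k A A).toLinearMap)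
      LinearMap.id) ∘ₗ
    (TensorProduct.tensorTensorTensorComm k A A A A).toLinearMap ∘ₗ
    (TensorProduct.map (TensorProduct.comm k A A).toLinearMap LinearMap.id)

noncomputable def T1223 (m : A →ₗ[k] A →ₗ[k] A) :
    (A ⊗[k] A) ⊗[k] (A ⊗[k] A) →ₗ[k] A ⊗[k] (A ⊗[k] A) :=
  (TensorProduct.leftComm k A A A).toLinearMap ∘ₗ
    (TensorProduct.map (TensorProduct.lift m) LinearMap.id) ∘ₗ
    (TensorProduct.tensorTensorTensorComm k A A A A).toLinearMap ∘ₗ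
    (TensorProduct.map (TensorProduct.comm k A A).toLinearMap LinearMap.id)

/-- `C(r) = [r₁₂,r₁₃] + [r₁₃,r₂₃] + [r₁₂,r₂₃]` for the bracket `br`. -/
noncomputable def cybe (br : A →ₗ[k] A →ₗ[k] A) (r : A ⊗[k] A) : A ⊗[k] (A ⊗[k] A) :=
  T1213 br (r ⊗ₜ[k] r) + T1323 br (r ⊗ₜ[k] r) + T1223 br (r ⊗ₜ[k] r)

/-- `A(r) = r₁₂·r₁₃ + r₁₃·r₂₃ − r₂₃·r₁₂` for the product `mul`. -/
noncomputable def aybe (mul : A →ₗ[k] A →ₗ[k] A) (r : A ⊗[k] A) : A ⊗[k] (A ⊗[k] A) :=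
  T1213 mul (r ⊗ₜ[k] r) + T1323 mul (r ⊗ₜ[k] r) - T2312 mul (r ⊗ₜ[k] r)

/-- `r` is a solution of the Poisson Yang–Baxter equation: `C(r) = 0` and `A(r) = 0`. -/
def IsPYBESolution (br mul : A →ₗ[k] A →ₗ[k] A) (r : A ⊗[k] A) : Prop :=
  cybe br r = 0 ∧ aybe mul r = 0

variable (k A) in
/-- `σ₁₃ : a ⊗ b ⊗ c ↦ c ⊗ b ⊗ a`. -/
noncomputable def sigma13 : A ⊗[k] (A ⊗[k] A) →ₗ[k] A ⊗[k] (A ⊗[k] A) :=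
  (TensorProduct.map LinearMap.id (TensorProduct.comm k A A).toLinearMap) ∘ₗ
    (TensorProduct.leftComm k A A A).toLinearMap ∘ₗ
    (TensorProduct.map LinearMap.id (TensorProduct.comm k A A).toLinearMap)

/-- `s ∈ A ⊗ A` is `(ad, L)`-invariant:
`(ad(a)⊗id + id⊗ad(a))(s) = 0` and `(L(a)⊗id − id⊗L(a))(s) = 0` for all `a`. -/
def IsAdLInvariant (br mul : A →ₗ[k] A →ₗ[k] A) (s : A ⊗[k] A) : Prop :=
  ∀ a : A,
    TensorProduct.map (br a) LinearMap.id s + TensorProduct.map LinearMap.id (br a) s = 0 ∧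
    TensorProduct.map (mul a) LinearMap.id s - TensorProduct.map LinearMap.id (mul a) s = 0

/-- The bracket `[x*,y*]_r = −ad*(r₊(x*))y* + ad*(r₋(y*))x*` on the dual space. -/
noncomputable def dualBr (br : A →ₗ[k] A →ₗ[k] A) (r : A ⊗[k] A) :
    Module.Dual k A →ₗ[k] Module.Dual k A →ₗ[k] Module.Dual k A :=
  LinearMap.mk₂ k
    (fun x y => - (br (rPlus r x)).dualMap y + (br (rMinus r y)).dualMap x)
    (fun x x' y => by simp [map_add]; try abel)
    (fun c x y => by simp [map_smul, smul_add]; try abel)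
    (fun x y y' => by simp [map_add]; try abel)
    (fun c x y => by simp [map_smul, smul_add]; try abel)

/-- The product `x*·_r y* = L*(r₊(x*))y* + L*(r₋(y*))x*` on the dual space. -/
noncomputable def dualMul (mul : A →ₗ[k] A →ₗ[k] A) (r : A ⊗[k] A) :
    Module.Dual k A →ₗ[k] Module.Dual k A →ₗ[k] Module.Dual k A :=
  LinearMap.mk₂ k
    (fun x y => (mul (rPlus r x)).dualMap y + (mul (rMinus r y)).dualMap x)
    (fun x x' y => by simp [map_add]; try abel)
    (fun c x y => by simp [map_smul, smul_add]; try abel)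
    (fun x y y' => by simp [map_add]; try abel)
    (fun c x y => by simp [map_smul, smul_add]; try abel)

/-- The descendent operation `a ∘_P b = (P a) ∘ b + a ∘ (P b) + λ a ∘ b`. -/
noncomputable def descOp (m : A →ₗ[k] A →ₗ[k] A) (lam : k) (P : A →ₗ[k] A) :
    A →ₗ[k] A →ₗ[k] A :=
  LinearMap.mk₂ k
    (fun a b => m (P a) b + m a (P b) + lam • m a b)
    (fun a a' b => by simp [map_add, smul_add]; try abel)
    (fun c a b => by simp [map_smul, smul_add, smul_smul, mul_comm]; try abel)
    (fun a b b' => by simp [map_add, smul_add]; try abel)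
    (fun c a b => by simp [map_smul, smul_add, smul_smul, mul_comm]; try abel)

/-- `P` is a Rota–Baxter operator of weight `λ` on the Poisson algebra `(A, br, mul)`. -/
def IsRotaBaxter (br mul : A →ₗ[k] A →ₗ[k] A) (lam : k) (P : A →ₗ[k] A) : Prop :=
  (∀ a b, br (P a) (P b) = P (br (P a) b + br a (P b) + lam • br a b)) ∧
  (∀ a b, mul (P a) (P b) = P (mul (P a) b + mul a (P b) + lam • mul a b))

/-- `((A, br, mul), B, P)` is a quadratic Rota–Baxter Poisson algebra of weight `λ`. -/
structure IsQuadraticRotaBaxter {k A : Type*} [Field k] [AddCommGroup A] [Module k A]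
    (br mul : A →ₗ[k] A →ₗ[k] A) (B : A →ₗ[k] A →ₗ[k] k) (lam : k) (P : A →ₗ[k] A) :
    Prop where
  poisson : IsPoisson br mul
  symm : ∀ a b, B a b = B b a
  nondeg : ∀ a, (∀ b, B a b = 0) → a = 0
  br_invariant : ∀ a b c, B (br a b) c = B a (br b c)
  mul_invariant : ∀ a b c, B (mul a b) c = B a (mul b c)
  rb : IsRotaBaxter br mul lam P
  compat : ∀ a b, B a (P b) + B (P a) b + lam • B a b = 0

/-- The semidirect-product bracket on `A ⊕ A*`:
`[(a,x*),(b,y*)] = ([a,b], −ad*(a)y* + ad*(b)x*)`. -/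
noncomputable def sdBr (br : A →ₗ[k] A →ₗ[k] A) :
    (A × Module.Dual k A) →ₗ[k] (A × Module.Dual k A) →ₗ[k] (A × Module.Dual k A) :=
  LinearMap.mk₂ k
    (fun p q => (br p.1 q.1, - (br p.1).dualMap q.2 + (br q.1).dualMap p.2))
    (fun p p' q => by simp [Prod.ext_iff, map_add]; try abel)
    (fun c p q => by simp [Prod.ext_iff, map_smul, smul_add]; try abel)
    (fun p q q' => by simp [Prod.ext_iff, map_add]; try abel)
    (fun c p q => by simp [Prod.ext_iff, map_smul, smul_add]; try abel)

/-- The semidirect-product multiplication on `A ⊕ A*`: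
`(a,x*)·(b,y*) = (a·b, L*(a)y* + L*(b)x*)`. -/
noncomputable def sdMul (mul : A →ₗ[k] A →ₗ[k] A) :
    (A × Module.Dual k A) →ₗ[k] (A × Module.Dual k A) →ₗ[k] (A × Module.Dual k A) :=
  LinearMap.mk₂ k
    (fun p q => (mul p.1 q.1, (mul p.1).dualMap q.2 + (mul q.1).dualMap p.2))
    (fun p p' q => by simp [Prod.ext_iff, map_add]; try abel)
    (fun c p q => by simp [Prod.ext_iff, map_smul, smul_add]; try abel)
    (fun p q q' => by simp [Prod.ext_iff, map_add]; try abel)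
    (fun c p q => by simp [Prod.ext_iff, map_smul, smul_add]; try abel)

/-- The canonical bilinear form `𝔅_d((a,x*),(b,y*)) = ⟨a,y*⟩ + ⟨b,x*⟩` on `A ⊕ A*`. -/
noncomputable def sdForm :
    (A × Module.Dual k A) →ₗ[k] (A × Module.Dual k A) →ₗ[k] k :=
  LinearMap.mk₂ k
    (fun p q => q.2 p.1 + p.2 q.1)
    (fun p p' q => by simp; try ring)
    (fun c p q => by simp [smul_add, smul_smul]; try ring)
    (fun p q q' => by simp; try ring)
    (fun c p q => by simp [smul_add, smul_smul]; try ring)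

end Preamble


section Aux

variable {k A : Type*} [Field k] [AddCommGroup A] [Module k A]

noncomputable def pair2 (y z : Module.Dual k A) : (A ⊗[k] A) →ₗ[k] k :=
  TensorProduct.lift (y.smulRight z)

noncomputable def pair3 (x y z : Module.Dual k A) : (A ⊗[k] (A ⊗[k] A)) →ₗ[k] k :=
  TensorProduct.lift (x.smulRight (pair2 y z))

@[simp] lemma pair2_tmul (y z : Module.Dual k A) (v w : A) :
    pair2 y z (v ⊗ₜ[k] w) = y v * z w := by
  simp [pair2, smul_eq_mul]

@[simp] lemma pair3_tmul (x y z : Module.Dual k A) (u : A) (q : A ⊗[k] A) :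
    pair3 x y z (u ⊗ₜ[k] q) = x u * pair2 y z q := by
  simp [pair3, smul_eq_mul]

@[simp] lemma dualMap_zero_apply (y : Module.Dual k A) :
    (0 : A →ₗ[k] A).dualMap y = 0 := by ext a; simp

lemma pair3_sep [FiniteDimensional k A] (t : A ⊗[k] (A ⊗[k] A))
    (h : ∀ x y z : Module.Dual k A, pair3 x y z t = 0) : t = 0 := by
  set b := Module.finBasis k A with hb
  set B3 := b.tensorProduct (b.tensorProduct b) with hB3
  have key : ∀ (i j l) (t : A ⊗[k] (A ⊗[k] A)),
      B3.repr t (i, (j, l)) = pair3 (b.coord i) (b.coord j) (b.coord l) t := by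
    intro i j l t
    induction t using TensorProduct.induction_on with
    | zero => simp
    | tmul u q =>
      induction q using TensorProduct.induction_on with
      | zero => simp
      | tmul v w =>
        simp [hB3, Module.Basis.tensorProduct_repr_tmul_apply, Module.Basis.coord_apply, smul_eq_mul]
        ring
      | add s t hs ht => simp only [tmul_add, map_add, Finsupp.add_apply, hs, ht]
    | add s t hs ht => simp only [map_add, Finsupp.add_apply, hs, ht]
  have h0 : B3.repr t = 0 := by
    ext p
    obtain ⟨i, j, l⟩ := p
    rw [key]
    simpa using h (b.coord i) (b.coord j) (b.coord l)
  exact (LinearEquiv.map_eq_zero_iff B3.repr).mp h0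

lemma T1213_tmul (m : A →ₗ[k] A →ₗ[k] A) (a b c d : A) :
    T1213 m ((a ⊗ₜ[k] b) ⊗ₜ[k] (c ⊗ₜ[k] d)) = (m a c) ⊗ₜ[k] (b ⊗ₜ[k] d) := by
  simp [T1213]

lemma T1323_tmul (m : A →ₗ[k] A →ₗ[k] A) (a b c d : A) :
    T1323 m ((a ⊗ₜ[k] b) ⊗ₜ[k] (c ⊗ₜ[k] d)) = a ⊗ₜ[k] (c ⊗ₜ[k] (m b d)) := by
  simp [T1323]

lemma T2312_tmul (m : A →ₗ[k] A →ₗ[k] A) (a b c d : A) :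
    T2312 m ((a ⊗ₜ[k] b) ⊗ₜ[k] (c ⊗ₜ[k] d)) = a ⊗ₜ[k] ((m c b) ⊗ₜ[k] d) := by
  simp [T2312]

lemma T1223_tmul (m : A →ₗ[k] A →ₗ[k] A) (a b c d : A) :
    T1223 m ((a ⊗ₜ[k] b) ⊗ₜ[k] (c ⊗ₜ[k] d)) = a ⊗ₜ[k] ((m b c) ⊗ₜ[k] d) := by
  simp [T1223]

lemma T1223_eq_neg (m : A →ₗ[k] A →ₗ[k] A) (hm : ∀ a b, m a b = - m b a)
    (v : (A ⊗[k] A) ⊗[k] (A ⊗[k] A)) : T1223 m v = - T2312 m v := by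
  induction v using TensorProduct.induction_on with
  | zero => simp
  | tmul p q =>
    induction p using TensorProduct.induction_on with
    | zero => simp
    | tmul a b =>
      induction q using TensorProduct.induction_on with
      | zero => simp
      | tmul c d =>
        rw [T1223_tmul, T2312_tmul, hm c b]
        simp [neg_tmul, tmul_neg]
      | add s t hs ht => simp only [tmul_add, map_add, hs, ht, neg_add]
    | add s t hs ht => simp only [add_tmul, map_add, hs, ht, neg_add]
  | add s t hs ht => simp only [map_add, hs, ht, neg_add]

lemma cybe_eq (br : A →ₗ[k] A →ₗ[k] A) (hanti : ∀ a b, br a b = - br b a) (r : A ⊗[k] A) :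
    cybe br r = T1213 br (r ⊗ₜ[k] r) + T1323 br (r ⊗ₜ[k] r) - T2312 br (r ⊗ₜ[k] r) := by
  rw [cybe, T1223_eq_neg br hanti]
  abel

lemma pair3_T1213 (m : A →ₗ[k] A →ₗ[k] A) (x y z : Module.Dual k A) (r r' : A ⊗[k] A) :
    pair3 x y z (T1213 m (r ⊗ₜ[k] r')) =
      z (rPlus r' ((m (rPlus (tauT r) y)).dualMap x)) := by
  induction r using TensorProduct.induction_on with
  | zero => simp [tauT]
  | tmul a b =>
    induction r' using TensorProduct.induction_on with
    | zero => simp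
    | tmul c d =>
      rw [T1213_tmul]
      simp [tauT, LinearMap.dualMap_apply, smul_eq_mul]
      try ring
    | add s t hs ht =>
      simp only [tmul_add, map_add, LinearMap.add_apply, hs, ht]
  | add s t hs ht =>
    simp only [add_tmul, map_add, LinearMap.add_apply, dualMap_add_apply, hs, ht]

lemma pair3_T1323 (m : A →ₗ[k] A →ₗ[k] A) (x y z : Module.Dual k A) (r r' : A ⊗[k] A) :
    pair3 x y z (T1323 m (r ⊗ₜ[k] r')) =
      z (m (rPlus r x) (rPlus r' y)) := by
  induction r using TensorProduct.induction_on with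
  | zero => simp
  | tmul a b =>
    induction r' using TensorProduct.induction_on with
    | zero => simp
    | tmul c d =>
      rw [T1323_tmul]
      simp [smul_eq_mul]
      try ring
    | add s t hs ht =>
      simp only [tmul_add, map_add, LinearMap.add_apply, hs, ht]
  | add s t hs ht =>
    simp only [add_tmul, map_add, LinearMap.add_apply, hs, ht]

lemma pair3_T2312 (m : A →ₗ[k] A →ₗ[k] A) (x y z : Module.Dual k A) (r r' : A ⊗[k] A) :
    pair3 x y z (T2312 m (r ⊗ₜ[k] r')) =
      z (rPlus r' ((m.flip (rPlus r x)).dualMap y)) := by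
  induction r using TensorProduct.induction_on with
  | zero => simp
  | tmul a b =>
    induction r' using TensorProduct.induction_on with
    | zero => simp
    | tmul c d =>
      rw [T2312_tmul]
      simp [LinearMap.dualMap_apply, smul_eq_mul]
      try ring
    | add s t hs ht =>
      simp only [tmul_add, map_add, LinearMap.add_apply, hs, ht]
  | add s t hs ht =>
    simp only [add_tmul, map_add, LinearMap.add_apply, dualMap_add_apply, hs, ht]

lemma pairM (m : A →ₗ[k] A →ₗ[k] A) (x y z : Module.Dual k A) (r : A ⊗[k] A) :
    pair3 x y z (T1213 m (r ⊗ₜ[k] r) + T1323 m (r ⊗ₜ[k] r) - T2312 m (r ⊗ₜ[k] r)) =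
      z (m (rPlus r x) (rPlus r y)
        + rPlus r ((m (rPlus (tauT r) y)).dualMap x)
        - rPlus r ((m.flip (rPlus r x)).dualMap y)) := by
  rw [map_sub, map_add, pair3_T1213, pair3_T1323, pair3_T2312, map_sub, map_add]
  ring

lemma keyEquiv [FiniteDimensional k A] (m : A →ₗ[k] A →ₗ[k] A)
    (B : A →ₗ[k] A →ₗ[k] k) (hsym : ∀ a b, B a b = B b a)
    (hinv : ∀ a b c, B (m a b) c = B a (m b c))
    (IB : Module.Dual k A ≃ₗ[k] A) (hIB : ∀ a b, IB.symm a b = B a b)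
    (r : A ⊗[k] A) :
    (T1213 m (r ⊗ₜ[k] r) + T1323 m (r ⊗ₜ[k] r) - T2312 m (r ⊗ₜ[k] r) = 0) ↔
    ∀ a b : A, m (rPlus r (IB.symm a)) (rPlus r (IB.symm b)) =
      rPlus r (IB.symm (m (rPlus r (IB.symm a)) b + m a (rPlus r (IB.symm b)) -
        m a (rPlus r (IB.symm b) - rMinus r (IB.symm b)))) := by
  have conv1 : ∀ a u : A, (m u).dualMap (IB.symm a) = IB.symm (m a u) := by
    intro a u
    ext w
    rw [LinearMap.dualMap_apply, hIB, hIB, hinv]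
  have conv2 : ∀ b c : A, (m.flip c).dualMap (IB.symm b) = IB.symm (m c b) := by
    intro b c
    ext w
    rw [LinearMap.dualMap_apply, LinearMap.flip_apply, hIB, hIB]
    calc B b (m w c) = B (m w c) b := hsym _ _
      _ = B w (m c b) := hinv _ _ _
      _ = B (m c b) w := hsym _ _
  have htau : ∀ y : Module.Dual k A, rPlus (tauT r) y = - rMinus r y := by
    intro y
    simp [rMinus]
  have hzero : ∀ a b : A,
      m (rPlus r (IB.symm a)) (rPlus r (IB.symm b))
        - rPlus r (IB.symm (m (rPlus r (IB.symm a)) b + m a (rPlus r (IB.symm b)) -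
            m a (rPlus r (IB.symm b) - rMinus r (IB.symm b))))
      = m (rPlus r (IB.symm a)) (rPlus r (IB.symm b))
        + rPlus r ((m (rPlus (tauT r) (IB.symm b))).dualMap (IB.symm a))
        - rPlus r ((m.flip (rPlus r (IB.symm a))).dualMap (IB.symm b)) := by
    intro a b
    rw [conv1, conv2, htau]
    simp only [map_sub, map_add, map_neg]
    abel
  constructor
  · intro h a b
    rw [← sub_eq_zero, hzero a b]
    refine (Module.forall_dual_apply_eq_zero_iff (R := k) _).mp ?_
    intro z
    have h2 := pairM m (IB.symm a) (IB.symm b) z r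
    rw [h, map_zero] at h2
    exact h2.symm
  · intro h
    apply pair3_sep
    intro x y z
    rw [pairM]
    have h0 := h (IB x) (IB y)
    rw [IB.symm_apply_apply, IB.symm_apply_apply] at h0
    have h3 := hzero (IB x) (IB y)
    rw [IB.symm_apply_apply, IB.symm_apply_apply] at h3
    rw [← h3, h0, sub_self, map_zero]

end Aux

/-- in a quadratic Poisson algebra, `r` solves the Poisson Yang–Baxter
equation iff `P = r₊ ∘ I_𝔅⁻¹` satisfies the stated (generalized Rota–Baxter) identities. -/
theorem statement6 {k A : Type*} [Field k] [AddCommGroup A] [Module k A]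
    [FiniteDimensional k A]
    (br mul : A →ₗ[k] A →ₗ[k] A) (hP : IsPoisson br mul)
    (B : A →ₗ[k] A →ₗ[k] k) (hsym : ∀ a b, B a b = B b a)
    (hbrinv : ∀ a b c, B (br a b) c = B a (br b c))
    (hmulinv : ∀ a b c, B (mul a b) c = B a (mul b c))
    (IB : Module.Dual k A ≃ₗ[k] A) (hIB : ∀ a b, IB.symm a b = B a b)
    (r : A ⊗[k] A) :
    IsPYBESolution br mul r ↔
      (∀ a b : A,
        br (rPlus r (IB.symm a)) (rPlus r (IB.symm b)) =
          rPlus r (IB.symm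
            (br (rPlus r (IB.symm a)) b + br a (rPlus r (IB.symm b)) -
              br a (rPlus r (IB.symm b) - rMinus r (IB.symm b)))) ∧
        mul (rPlus r (IB.symm a)) (rPlus r (IB.symm b)) =
          rPlus r (IB.symm
            (mul (rPlus r (IB.symm a)) b + mul a (rPlus r (IB.symm b)) -
              mul a (rPlus r (IB.symm b) - rMinus r (IB.symm b))))) := by
  unfold IsPYBESolution
  rw [cybe_eq br hP.antisymm r]
  unfold aybe
  rw [keyEquiv br B hsym hbrinv IB hIB r, keyEquiv mul B hsym hmulinv IB hIB r]
  exact ⟨fun h a b => ⟨h.1 a b, h.2 a b⟩,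
    fun h => ⟨fun a b => (h a b).1, fun a b => (h a b).2⟩⟩
end

section
/- Let (A,[·,·],·) be a finite-dimensional Poisson algebra over a field and r ∈ A⊗A a solution of the Poisson Yang–Baxter equation whose symmetric part is (ad,L)-invariant and such that I_r = r₊ − r₋ is a linear isomorphism (i.e., r gives a factorizable Poisson bialgebra). Then: (i) the image of the map r₊ ⊕ r₋: A* → A ⊕ A, x* ↦ (r₊(x*), r₋(x*)), is a Poisson subalgebra of the direct sum Poisson algebra A ⊕ A; (ii) r₊ ⊕ r₋ is an isomorphism of Poisson algebras from (A*,[·,·]_r,·_r) onto this subalgebra, where [x*,y*]_r = −ad*(r₊(x*))y* + ad*(r₋(y*))x* and x*·_r y* = L*(r₊(x*))y* + L*(r₋(y*))x*; (iii) every a ∈ A has a unique decomposition a = a₊ − a₋ with (a₊, a₋) ∈ Im(r₊ ⊕ r₋), namely a₊ = r₊(I_r⁻¹(a)) and a₋ = r₋(I_r⁻¹(a)). -/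
open TensorProduct

section Aux
variable {k A : Type*} [Field k] [AddCommGroup A] [Module k A]

lemma rMinus_eq (r : A ⊗[k] A) (x : Module.Dual k A) :
    rMinus r x = - rPlus (tauT r) x := by
  simp [rMinus]

lemma rPlus_map_left (f : A →ₗ[k] A) (s : A ⊗[k] A) (x : Module.Dual k A) :
    rPlus (TensorProduct.map f LinearMap.id s) x = rPlus s (f.dualMap x) := by
  induction s using TensorProduct.induction_on with
  | zero => simp
  | tmul a b => simp
  | add s t hs ht => simp [hs, ht]

lemma rPlus_map_right (f : A →ₗ[k] A) (s : A ⊗[k] A) (x : Module.Dual k A) :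
    rPlus (TensorProduct.map LinearMap.id f s) x = f (rPlus s x) := by
  induction s using TensorProduct.induction_on with
  | zero => simp
  | tmul a b => simp
  | add s t hs ht => simp [hs, ht]

/-- Contraction of the first two slots of `A ⊗ (A ⊗ A)` with dual vectors. -/
noncomputable def Kc (x y : Module.Dual k A) : A ⊗[k] (A ⊗[k] A) →ₗ[k] A :=
  (TensorProduct.lid k A).toLinearMap ∘ₗ
    TensorProduct.map x ((TensorProduct.lid k A).toLinearMap ∘ₗ
      TensorProduct.map y LinearMap.id)

@[simp] lemma Kc_tmul (x y : Module.Dual k A) (a b c : A) :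
    Kc x y (a ⊗ₜ[k] (b ⊗ₜ[k] c)) = (x a * y b) • c := by
  simp [Kc, smul_smul, mul_comm]

@[simp] lemma dualMap_zero' : (0 : A →ₗ[k] A).dualMap = (0 : Module.Dual k A →ₗ[k] Module.Dual k A) := by
  ext x a; simp

lemma K1213 (m : A →ₗ[k] A →ₗ[k] A) (x y : Module.Dual k A) (r1 r2 : A ⊗[k] A) :
    Kc x y (T1213 m (r1 ⊗ₜ[k] r2)) = - rPlus r2 ((m (rMinus r1 y)).dualMap x) := by
  induction r1 using TensorProduct.induction_on with
  | zero => simp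
  | add s t hs ht =>
      simp only [add_tmul, map_add, hs, ht, LinearMap.add_apply, dualMap_add_apply]
      try abel
  | tmul a b =>
      induction r2 using TensorProduct.induction_on with
      | zero => simp
      | add s t hs ht =>
          simp only [tmul_add, map_add, hs, ht, LinearMap.add_apply, dualMap_add_apply]
          try abel
      | tmul c d =>
          simp [T1213, rMinus, tauT, mul_comm, smul_smul]

lemma K1323 (m : A →ₗ[k] A →ₗ[k] A) (x y : Module.Dual k A) (r1 r2 : A ⊗[k] A) :
    Kc x y (T1323 m (r1 ⊗ₜ[k] r2)) = m (rPlus r1 x) (rPlus r2 y) := by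
  induction r1 using TensorProduct.induction_on with
  | zero => simp
  | add s t hs ht =>
      simp only [add_tmul, map_add, hs, ht, LinearMap.add_apply, dualMap_add_apply]
      try abel
  | tmul a b =>
      induction r2 using TensorProduct.induction_on with
      | zero => simp
      | add s t hs ht =>
          simp only [tmul_add, map_add, hs, ht, LinearMap.add_apply, dualMap_add_apply]
          try abel
      | tmul c d =>
          simp [T1323, mul_comm, smul_smul, mul_left_comm]

lemma K1223 (m : A →ₗ[k] A →ₗ[k] A) (x y : Module.Dual k A) (r1 r2 : A ⊗[k] A) :
    Kc x y (T1223 m (r1 ⊗ₜ[k] r2)) = rPlus r2 ((m (rPlus r1 x)).dualMap y) := by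
  induction r1 using TensorProduct.induction_on with
  | zero => simp
  | add s t hs ht =>
      simp only [add_tmul, map_add, hs, ht, LinearMap.add_apply, dualMap_add_apply]
      try abel
  | tmul a b =>
      induction r2 using TensorProduct.induction_on with
      | zero => simp
      | add s t hs ht =>
          simp only [tmul_add, map_add, hs, ht, LinearMap.add_apply, dualMap_add_apply]
          try abel
      | tmul c d =>
          simp [T1223, mul_comm, smul_smul, mul_left_comm]

lemma K2312 (m : A →ₗ[k] A →ₗ[k] A) (x y : Module.Dual k A) (r1 r2 : A ⊗[k] A) :
    Kc x y (T2312 m (r1 ⊗ₜ[k] r2)) = rPlus r2 ((m.flip (rPlus r1 x)).dualMap y) := by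
  induction r1 using TensorProduct.induction_on with
  | zero => simp
  | add s t hs ht =>
      simp only [add_tmul, map_add, hs, ht, LinearMap.add_apply, dualMap_add_apply]
      try abel
  | tmul a b =>
      induction r2 using TensorProduct.induction_on with
      | zero => simp
      | add s t hs ht =>
          simp only [tmul_add, map_add, hs, ht, LinearMap.add_apply, dualMap_add_apply]
          try abel
      | tmul c d =>
          simp [T2312, mul_comm, smul_smul, mul_left_comm]

end Aux

section Aux2
variable {k A : Type*} [Field k] [AddCommGroup A] [Module k A]

lemma rPlus_dualBr (br : A →ₗ[k] A →ₗ[k] A) (r : A ⊗[k] A)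
    (hc : cybe br r = 0) (x y : Module.Dual k A) :
    rPlus r (dualBr br r x y) = br (rPlus r x) (rPlus r y) := by
  have h := congrArg (Kc x y) hc
  rw [cybe] at h
  simp only [map_add, K1213, K1323, K1223, map_zero] at h
  have hd : dualBr br r x y
      = -(br (rPlus r x)).dualMap y + (br (rMinus r y)).dualMap x := rfl
  rw [hd, map_add, map_neg, ← sub_eq_zero]
  rw [show -rPlus r ((br (rPlus r x)).dualMap y) + rPlus r ((br (rMinus r y)).dualMap x)
        - br (rPlus r x) (rPlus r y)
      = -(-rPlus r ((br (rMinus r y)).dualMap x) + br (rPlus r x) (rPlus r y)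
        + rPlus r ((br (rPlus r x)).dualMap y)) from by abel, h, neg_zero]

lemma rPlus_dualMul (mul : A →ₗ[k] A →ₗ[k] A) (r : A ⊗[k] A)
    (hcomm : ∀ a b, mul a b = mul b a)
    (ha : aybe mul r = 0) (x y : Module.Dual k A) :
    rPlus r (dualMul mul r x y) = mul (rPlus r x) (rPlus r y) := by
  have h := congrArg (Kc x y) ha
  rw [aybe] at h
  simp only [map_add, map_sub, K1213, K1323, K2312, map_zero] at h
  have hflip : mul.flip (rPlus r x) = mul (rPlus r x) := by
    ext b; exact hcomm b (rPlus r x)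
  rw [hflip] at h
  have hd : dualMul mul r x y
      = (mul (rPlus r x)).dualMap y + (mul (rMinus r y)).dualMap x := rfl
  rw [hd, map_add, ← sub_eq_zero]
  rw [show rPlus r ((mul (rPlus r x)).dualMap y) + rPlus r ((mul (rMinus r y)).dualMap x)
        - mul (rPlus r x) (rPlus r y)
      = -(-rPlus r ((mul (rMinus r y)).dualMap x) + mul (rPlus r x) (rPlus r y)
        - rPlus r ((mul (rPlus r x)).dualMap y)) from by abel, h, neg_zero]

lemma inv_plus (f : A →ₗ[k] A) (S : A ⊗[k] A)
    (h : TensorProduct.map f LinearMap.id S + TensorProduct.map LinearMap.id f S = 0)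
    (x : Module.Dual k A) :
    rPlus S (f.dualMap x) = - f (rPlus S x) := by
  have h2 := congrArg (fun t => rPlus t x) h
  simp only [map_add, LinearMap.add_apply, rPlus_map_left, rPlus_map_right, map_zero,
    LinearMap.zero_apply] at h2
  exact eq_neg_of_add_eq_zero_left h2

lemma inv_mulS (f : A →ₗ[k] A) (S : A ⊗[k] A)
    (h : TensorProduct.map f LinearMap.id S - TensorProduct.map LinearMap.id f S = 0)
    (x : Module.Dual k A) :
    rPlus S (f.dualMap x) = f (rPlus S x) := by
  have h2 := congrArg (fun t => rPlus t x) h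
  simp only [map_sub, LinearMap.sub_apply, rPlus_map_left, rPlus_map_right, map_zero,
    LinearMap.zero_apply] at h2
  exact sub_eq_zero.mp h2

lemma two_rPlus_S (r S Lam : A ⊗[k] A) (hdec : r = S + Lam) (hS : tauT S = S)
    (hLam : tauT Lam = - Lam) (x : Module.Dual k A) :
    rPlus r x - rMinus r x = (2:k) • rPlus S x := by
  have ht : tauT r = S - Lam := by rw [hdec, map_add, hS, hLam]; abel
  rw [rMinus_eq, ht, hdec]
  simp only [map_add, map_sub, LinearMap.add_apply, LinearMap.sub_apply]
  rw [two_smul]; abel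

end Aux2

/-- a factorizable Poisson bialgebra induces a factorization of the underlying
Poisson algebra via the image of `r₊ ⊕ r₋`. -/
theorem statement8 {k A : Type*} [Field k] [AddCommGroup A] [Module k A]
    [FiniteDimensional k A]
    (br mul : A →ₗ[k] A →ₗ[k] A) (hP : IsPoisson br mul)
    (r S Lam : A ⊗[k] A) (hdec : r = S + Lam) (hS : tauT S = S) (hLam : tauT Lam = - Lam)
    (hr : IsPYBESolution br mul r) (hinv : IsAdLInvariant br mul S)
    (Ir : Module.Dual k A ≃ₗ[k] A) (hIr : ∀ x, Ir x = rPlus r x - rMinus r x) :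
    (∀ p q : A × A, p ∈ LinearMap.range ((rPlus r).prod (rMinus r)) →
      q ∈ LinearMap.range ((rPlus r).prod (rMinus r)) →
      ((br p.1 q.1, br p.2 q.2) ∈ LinearMap.range ((rPlus r).prod (rMinus r)) ∧
        (mul p.1 q.1, mul p.2 q.2) ∈ LinearMap.range ((rPlus r).prod (rMinus r)))) ∧
    (Function.Injective ((rPlus r).prod (rMinus r)) ∧
      (∀ x y : Module.Dual k A,
        (rPlus r).prod (rMinus r) (dualBr br r x y) =
          (br (rPlus r x) (rPlus r y), br (rMinus r x) (rMinus r y)) ∧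
        (rPlus r).prod (rMinus r) (dualMul mul r x y) =
          (mul (rPlus r x) (rPlus r y), mul (rMinus r x) (rMinus r y)))) ∧
    (∀ a : A, ∃! p : A × A,
      p ∈ LinearMap.range ((rPlus r).prod (rMinus r)) ∧ a = p.1 - p.2) ∧
    (∀ a : A,
      a = rPlus r (Ir.symm a) - rMinus r (Ir.symm a) ∧
      (rPlus r (Ir.symm a), rMinus r (Ir.symm a)) ∈
        LinearMap.range ((rPlus r).prod (rMinus r))) := by
  obtain ⟨hc, ha⟩ := hr
  have hpb := rPlus_dualBr br r hc
  have hpm := rPlus_dualMul mul r hP.comm ha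
  have h2S := two_rPlus_S r S Lam hdec hS hLam
  have hSbr : ∀ (a : A) (x : Module.Dual k A),
      rPlus S ((br a).dualMap x) = - br a (rPlus S x) :=
    fun a x => inv_plus (br a) S (hinv a).1 x
  have hSml : ∀ (a : A) (x : Module.Dual k A),
      rPlus S ((mul a).dualMap x) = mul a (rPlus S x) :=
    fun a x => inv_mulS (mul a) S (hinv a).2 x
  have hmsub : ∀ t, rMinus r t = rPlus r t - (2:k) • rPlus S t := by
    intro t; rw [← h2S t]; abel
  have hmb : ∀ x y, rMinus r (dualBr br r x y) = br (rMinus r x) (rMinus r y) := by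
    intro x y
    rw [hmsub, hpb]
    have hd : dualBr br r x y
        = -(br (rPlus r x)).dualMap y + (br (rMinus r y)).dualMap x := rfl
    rw [hd, map_add, map_neg, hSbr, hSbr, neg_neg]
    rw [smul_add, smul_neg, ← map_smul (br (rPlus r x)), ← map_smul (br (rMinus r y)),
      ← h2S, ← h2S]
    simp only [map_sub]
    rw [hP.antisymm (rPlus r x) (rMinus r y), hP.antisymm (rMinus r x) (rMinus r y)]
    abel
  have hmm : ∀ x y, rMinus r (dualMul mul r x y) = mul (rMinus r x) (rMinus r y) := by
    intro x y
    rw [hmsub, hpm]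
    have hd : dualMul mul r x y
        = (mul (rPlus r x)).dualMap y + (mul (rMinus r y)).dualMap x := rfl
    rw [hd, map_add, hSml, hSml]
    rw [smul_add, ← map_smul (mul (rPlus r x)), ← map_smul (mul (rMinus r y)),
      ← h2S, ← h2S]
    simp only [map_sub]
    rw [hP.comm (rPlus r x) (rMinus r y), hP.comm (rMinus r x) (rMinus r y)]
    abel
  have hFapp : ∀ t, ((rPlus r).prod (rMinus r)) t = (rPlus r t, rMinus r t) := fun t => rfl
  refine ⟨?_, ⟨?_, ?_⟩, ?_, ?_⟩
  · rintro p q ⟨μ, rfl⟩ ⟨ν, rfl⟩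
    refine ⟨⟨dualBr br r μ ν, ?_⟩, ⟨dualMul mul r μ ν, ?_⟩⟩
    · rw [hFapp, hpb, hmb]; rfl
    · rw [hFapp, hpm, hmm]; rfl
  · intro x y h
    apply Ir.injective
    rw [hIr, hIr]
    have h1 : rPlus r x = rPlus r y := congrArg Prod.fst h
    have h2 : rMinus r x = rMinus r y := congrArg Prod.snd h
    rw [h1, h2]
  · intro x y
    constructor
    · rw [hFapp, hpb, hmb]
    · rw [hFapp, hpm, hmm]
  · intro a
    refine ⟨(rPlus r (Ir.symm a), rMinus r (Ir.symm a)), ⟨⟨Ir.symm a, rfl⟩, ?_⟩, ?_⟩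
    · rw [← hIr, Ir.apply_symm_apply]
    · rintro p ⟨⟨μ, rfl⟩, hpa⟩
      have hμa : Ir μ = a := by rw [hIr]; exact hpa.symm
      have hμ : μ = Ir.symm a := by rw [← hμa, Ir.symm_apply_apply]
      rw [hFapp, hμ]
  · intro a
    exact ⟨by rw [← hIr, Ir.apply_symm_apply], ⟨Ir.symm a, rfl⟩⟩
end
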